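/- Let A be an abelian category with enough injectives, let W be a thick class of objects, and let (W₁, F₁) and (W₂, F₂) be injective cotorsion pairs. If W₂ ∩ W = W₁ and F₂ ⊆ W, then W ∩ F₁ = F₂; consequently (W₂, W, F₁) is a Hovey triple. -/
import Mathlib


open CategoryTheory CategoryTheory.Limits

universe w v u

variable {A : Type u} [Category.{v} A] [Abelian A]

/-- `IsShortExact i p` asserts that `0 → X → Y → Z → 0` is a short exact sequence. -/
def IsShortExact {X Y Z : A} (i : X ⟶ Y) (p : Y ⟶ Z) : Prop :=
  ∃ w : i ≫ p = 0, (ShortComplex.mk i p w).ShortExact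

section Ext

variable [HasExt.{w} A]

/-- `Ext¹(X, Y) = 0`. -/
def Ext1Zero (X Y : A) : Prop := Subsingleton (Abelian.Ext X Y 1)

/-- `(F, C)` is a cotorsion pair: each class is the `Ext¹`-orthogonal of the other. -/
def IsCotorsionPair (F C : Set A) : Prop :=
  (∀ X : A, X ∈ F ↔ ∀ Y ∈ C, Ext1Zero.{w} X Y) ∧
  (∀ Y : A, Y ∈ C ↔ ∀ X ∈ F, Ext1Zero.{w} X Y)

/-- A complete cotorsion pair: for every object `X` there are short exact sequences
`0 → C → F → X → 0` and `0 → X → C' → F' → 0` with `F, F'` in the left class and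
`C, C'` in the right class. -/
def IsCompleteCotorsionPair (F C : Set A) : Prop :=
  IsCotorsionPair.{w} F C ∧
  (∀ X : A, ∃ (Co Fo : A) (i : Co ⟶ Fo) (p : Fo ⟶ X),
    Co ∈ C ∧ Fo ∈ F ∧ IsShortExact i p) ∧
  (∀ X : A, ∃ (Co Fo : A) (i : X ⟶ Co) (p : Co ⟶ Fo),
    Co ∈ C ∧ Fo ∈ F ∧ IsShortExact i p)

end Ext

/-- A thick class: closed under direct summands (retracts) and satisfying two-out-of-three
for short exact sequences. -/
def IsThickClass (W : Set A) : Prop :=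
  (∀ (X Y : A) (s : Y ⟶ X) (r : X ⟶ Y), s ≫ r = 𝟙 Y → X ∈ W → Y ∈ W) ∧
  (∀ ⦃X Y Z : A⦄ (i : X ⟶ Y) (p : Y ⟶ Z), IsShortExact i p →
    (X ∈ W → Y ∈ W → Z ∈ W) ∧ (X ∈ W → Z ∈ W → Y ∈ W) ∧ (Y ∈ W → Z ∈ W → X ∈ W))

/-- The class `F` is closed under kernels of epimorphisms between objects of `F`. -/
def ClosedUnderKernelsOfEpis (F : Set A) : Prop :=
  ∀ ⦃X Y Z : A⦄ (i : X ⟶ Y) (p : Y ⟶ Z), IsShortExact i p → Y ∈ F → Z ∈ F → X ∈ F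

/-- The class `C` is closed under cokernels of monomorphisms between objects of `C`. -/
def ClosedUnderCokernelsOfMonos (C : Set A) : Prop :=
  ∀ ⦃X Y Z : A⦄ (i : X ⟶ Y) (p : Y ⟶ Z), IsShortExact i p → X ∈ C → Y ∈ C → Z ∈ C

/-- An injective cotorsion pair: a complete cotorsion pair `(W, F)` with `W` thick and
`W ∩ F` equal to the class of injective objects. -/
def IsInjectiveCotorsionPair [HasExt.{w} A] (W F : Set A) : Prop :=
  IsCompleteCotorsionPair.{w} W F ∧ IsThickClass W ∧
  ∀ X : A, (X ∈ W ∧ X ∈ F) ↔ Injective X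

/-- A projective cotorsion pair: a complete cotorsion pair `(C, W)` with `W` thick and
`C ∩ W` equal to the class of projective objects. -/
def IsProjectiveCotorsionPair [HasExt.{w} A] (C W : Set A) : Prop :=
  IsCompleteCotorsionPair.{w} C W ∧ IsThickClass W ∧
  ∀ X : A, (X ∈ C ∧ X ∈ W) ↔ Projective X

/-- A Hovey triple `(Q, W, R)`: `W` is thick and both `(Q, W ∩ R)` and `(Q ∩ W, R)` are
complete cotorsion pairs. -/
def IsHoveyTriple [HasExt.{w} A] (Q W R : Set A) : Prop :=
  IsThickClass W ∧ IsCompleteCotorsionPair.{w} Q (W ∩ R) ∧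
    IsCompleteCotorsionPair.{w} (Q ∩ W) R

open Abelian in
lemma ext_one_subsingleton_aux [HasExt.{w} A] {X Co Fo : A} (i : X ⟶ Co) (p : Co ⟶ Fo)
    (hse : IsShortExact i p) (Z : A) (hCo : Subsingleton (Ext Z Co 1))
    (hFo : Subsingleton (Ext Fo X 1)) : Subsingleton (Ext Z X 1) := by
  obtain ⟨w, hS⟩ := hse
  have hexact := Ext.covariant_sequence_exact₁' Z hS 0 1 rfl
  rw [ShortComplex.ab_exact_iff] at hexact
  constructor
  intro e e'
  have h1 : ((Ext.mk₀ i).postcomp Z (add_zero 1)) (e - e') = 0 := by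
    rw [map_sub]
    have : (e.comp (Ext.mk₀ i) (add_zero 1)) = (e'.comp (Ext.mk₀ i) (add_zero 1)) :=
      Subsingleton.elim _ _
    simpa [Ext.postcomp] using sub_eq_zero_of_eq this
  obtain ⟨x, hx⟩ := hexact (e - e') h1
  have hcl : hS.extClass = 0 := Subsingleton.elim _ _
  have : x.comp hS.extClass rfl = e - e' := hx
  rw [hcl, Ext.comp_zero] at this
  exact sub_eq_zero.mp this.symm

theorem spotting_localizations_two [EnoughInjectives A] [HasExt.{w} A]
    (Wc : Set A) (hWc : IsThickClass Wc) (W₁ F₁ W₂ F₂ : Set A)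
    (h1 : IsInjectiveCotorsionPair.{w} W₁ F₁) (h2 : IsInjectiveCotorsionPair.{w} W₂ F₂)
    (hW : W₂ ∩ Wc = W₁) (hF : F₂ ⊆ Wc) :
    Wc ∩ F₁ = F₂ ∧ IsHoveyTriple.{w} W₂ Wc F₁ := by
  have hF2F1 : F₂ ⊆ F₁ := by
    intro X hX
    rw [(h1.1.1.2 X)]
    intro Z hZ
    have hZ2 : Z ∈ W₂ := by rw [← hW] at hZ; exact hZ.1
    exact ((h2.1.1.1 Z).mp hZ2) X hX
  have key : Wc ∩ F₁ = F₂ := by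
    apply Set.eq_of_subset_of_subset
    · rintro X ⟨hXW, hXF⟩
      obtain ⟨Co, Fo, i, p, hCo, hFo, hse⟩ := h2.1.2.2 X
      -- 0 → X → Co → Fo → 0 with Co ∈ F₂, Fo ∈ W₂
      have hCoW : Co ∈ Wc := hF hCo
      have hFoW : Fo ∈ Wc := ((hWc.2 i p hse).1) hXW hCoW
      have hFo1 : Fo ∈ W₁ := by rw [← hW]; exact ⟨hFo, hFoW⟩
      have hExtFoX : Ext1Zero.{w} Fo X := ((h1.1.1.1 Fo).mp hFo1) X hXF
      rw [(h2.1.1.2 X)]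
      intro Z hZ
      have hExtZCo : Ext1Zero.{w} Z Co := ((h2.1.1.1 Z).mp hZ) Co hCo
      exact ext_one_subsingleton_aux i p hse Z hExtZCo hExtFoX
    · exact fun X hX => ⟨hF hX, hF2F1 hX⟩
  refine ⟨key, hWc, ?_, ?_⟩
  · rw [key]; exact h2.1
  · rw [hW]; exact h1.1
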